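/- Let q ≥ q' ≥ p ≥ 1, let A ∈ ℂ^{m×N}, and let Δ : ℂ^m → ℂ^N be such that (A,Δ) is (q,p)–n–instance-optimal with constant C_N. Then there exists a map Δ' : ℂ^m → ℂ^N such that (A,Δ') is (q',p)–n–instance-optimal with constant 6C_N + 2. -/

import Mathlib

open scoped BigOperators
open scoped Classical

/-- The `ℓ_p` norm of a finite complex vector. -/
noncomputable def lpNorm {ι : Type*} [Fintype ι] (p : ℝ) (v : ι → ℂ) : ℝ :=
  (∑ i, ‖v i‖ ^ p) ^ (1 / p)

/-- Number of nonzero entries of a vector. -/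
noncomputable def sparsity {ι : Type*} [Fintype ι] (v : ι → ℂ) : ℕ :=
  (Finset.univ.filter fun i => v i ≠ 0).card

/-- Best `n`-term approximation error of `v` in `ℓ_p`. -/
noncomputable def bestApprox {ι : Type*} [Fintype ι] (n : ℕ) (p : ℝ) (v : ι → ℂ) : ℝ :=
  sInf {t : ℝ | ∃ z : ι → ℂ, sparsity z ≤ n ∧ t = lpNorm p (v - z)}

/-- `A` satisfies the restricted isometry property of order `n` with constant `δ`. -/
def HasRIP {m : ℕ} {ι : Type*} [Fintype ι] (A : Matrix (Fin m) ι ℂ) (n : ℕ) (δ : ℝ) : Prop :=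
  ∀ v : ι → ℂ, sparsity v ≤ n →
    (1 - δ) * lpNorm 2 v ^ 2 ≤ lpNorm 2 (A.mulVec v) ^ 2 ∧
      lpNorm 2 (A.mulVec v) ^ 2 ≤ (1 + δ) * lpNorm 2 v ^ 2

/-- `A` satisfies the `ℓ₂`-robust null space property of order `n`
with constants `ρ` and `τ`. -/
def HasNSP {m : ℕ} {ι : Type*} [Fintype ι] (A : Matrix (Fin m) ι ℂ) (n : ℕ) (ρ τ : ℝ) : Prop :=
  ∀ (v : ι → ℂ) (S : Finset ι), S.card ≤ n →
    lpNorm 2 (fun i => if i ∈ S then v i else 0) ≤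
      ρ * (n : ℝ) ^ (-(1 : ℝ) / 2) * lpNorm 1 (fun i => if i ∈ S then 0 else v i) +
        τ * lpNorm 2 (A.mulVec v)

/-- `(A, Δ)` is `(q,p)`–`n`–instance-optimal with constant `C`. -/
def InstOpt {m N : ℕ} (A : Matrix (Fin m) (Fin N) ℂ) (Δ : (Fin m → ℂ) → Fin N → ℂ)
    (q p : ℝ) (n : ℕ) (C : ℝ) : Prop :=
  ∀ z : Fin N → ℂ,
    lpNorm q (z - Δ (A.mulVec z)) ≤ C * (n : ℝ) ^ (1 / q - 1 / p) * bestApprox n p z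

namespace Stmt9Aux

variable {ι : Type*} [Fintype ι] [DecidableEq ι]

/-- Restriction of a vector to a finset (zero outside). -/
noncomputable def restr (S : Finset ι) (v : ι → ℂ) : ι → ℂ :=
  fun i => if i ∈ S then v i else 0

lemma sum_rpow_nonneg (p : ℝ) (v : ι → ℂ) : 0 ≤ ∑ i, ‖v i‖ ^ p :=
  Finset.sum_nonneg fun i _ => Real.rpow_nonneg (norm_nonneg _) _

lemma lpNorm_nonneg (p : ℝ) (v : ι → ℂ) : 0 ≤ lpNorm p v :=
  Real.rpow_nonneg (sum_rpow_nonneg p v) _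

lemma lpNorm_rpow {p : ℝ} (hp : 0 < p) (v : ι → ℂ) :
    lpNorm p v ^ p = ∑ i, ‖v i‖ ^ p := by
  rw [lpNorm, ← Real.rpow_mul (sum_rpow_nonneg p v), one_div, inv_mul_cancel₀ hp.ne',
    Real.rpow_one]

lemma coord_le_lpNorm {p : ℝ} (hp : 0 < p) (v : ι → ℂ) (j : ι) :
    ‖v j‖ ≤ lpNorm p v := by
  have h1 : ‖v j‖ ^ p ≤ ∑ i, ‖v i‖ ^ p :=
    Finset.single_le_sum (fun i _ => Real.rpow_nonneg (norm_nonneg _) _) (Finset.mem_univ j)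
  have h2 : (‖v j‖ ^ p) ^ (1 / p) ≤ lpNorm p v :=
    Real.rpow_le_rpow (Real.rpow_nonneg (norm_nonneg _) _) h1 (by positivity)
  rwa [← Real.rpow_mul (norm_nonneg _), mul_one_div, div_self hp.ne', Real.rpow_one] at h2

lemma lpNorm_zero {p : ℝ} (hp : 0 < p) : lpNorm p (0 : ι → ℂ) = 0 := by
  have h1 : (1 / p) ≠ 0 := by positivity
  rw [lpNorm]
  have : ∀ i : ι, ‖(0 : ι → ℂ) i‖ ^ p = 0 := fun i => by
    simp [Real.zero_rpow hp.ne']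
  rw [Finset.sum_congr rfl fun i _ => this i, Finset.sum_const, smul_zero,
    Real.zero_rpow h1]

lemma lpNorm_eq_zero {p : ℝ} (hp : 0 < p) {v : ι → ℂ} (h : lpNorm p v = 0) : v = 0 := by
  funext j
  have := coord_le_lpNorm hp v j
  rw [h] at this
  simpa using norm_le_zero_iff.mp this

lemma lpNorm_mono {p : ℝ} (hp : 0 < p) {u v : ι → ℂ} (h : ∀ i, ‖u i‖ ≤ ‖v i‖) :
    lpNorm p u ≤ lpNorm p v :=
  Real.rpow_le_rpow (sum_rpow_nonneg p u)
    (Finset.sum_le_sum fun i _ => Real.rpow_le_rpow (norm_nonneg _) (h i) hp.le)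
    (by positivity)

lemma lpNorm_neg (p : ℝ) (v : ι → ℂ) : lpNorm p (-v) = lpNorm p v := by
  simp [lpNorm]

lemma lpNorm_add_le {p : ℝ} (hp : 1 ≤ p) (u v : ι → ℂ) :
    lpNorm p (u + v) ≤ lpNorm p u + lpNorm p v := by
  have hp0 : 0 < p := lt_of_lt_of_le one_pos hp
  have h1 : lpNorm p (u + v) ≤ (∑ i, (‖u i‖ + ‖v i‖) ^ p) ^ (1 / p) := by
    refine Real.rpow_le_rpow (sum_rpow_nonneg p _) (Finset.sum_le_sum fun i _ => ?_)
      (by positivity)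
    exact Real.rpow_le_rpow (norm_nonneg _) (norm_add_le _ _) hp0.le
  exact h1.trans (Real.Lp_add_le_of_nonneg Finset.univ hp (fun i _ => norm_nonneg (u i))
    (fun i _ => norm_nonneg (v i)))

lemma lpNorm_sub_le {p : ℝ} (hp : 1 ≤ p) (u v : ι → ℂ) :
    lpNorm p (u - v) ≤ lpNorm p u + lpNorm p v := by
  have := lpNorm_add_le hp u (-v)
  rwa [lpNorm_neg, ← sub_eq_add_neg] at this

lemma sub_restr (S : Finset ι) (v : ι → ℂ) : v - restr S v = restr Sᶜ v := by
  funext i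
  by_cases h : i ∈ S <;> simp [restr, h]

lemma sparsity_restr_le (S : Finset ι) (v : ι → ℂ) : sparsity (restr S v) ≤ S.card := by
  refine Finset.card_le_card fun i hi => ?_
  rw [Finset.mem_filter] at hi
  by_contra h
  exact hi.2 (by simp [restr, h])

lemma lpNorm_restr_le {p : ℝ} (hp : 0 < p) (S : Finset ι) (v : ι → ℂ) :
    lpNorm p (restr S v) ≤ lpNorm p v := by
  refine lpNorm_mono hp fun i => ?_
  by_cases h : i ∈ S <;> simp [restr, h]

lemma lpNorm_restr_mono {p : ℝ} (hp : 0 < p) {S T : Finset ι} (hST : S ⊆ T) (v : ι → ℂ) :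
    lpNorm p (restr S v) ≤ lpNorm p (restr T v) := by
  refine lpNorm_mono hp fun i => ?_
  by_cases h : i ∈ S
  · simp [restr, h, hST h]
  · simp only [restr, if_neg h, norm_zero]
    positivity

lemma sum_restr {r : ℝ} (hr : 0 < r) (S : Finset ι) (v : ι → ℂ) :
    ∑ i, ‖restr S v i‖ ^ r = ∑ i ∈ S, ‖v i‖ ^ r := by
  rw [← Fintype.sum_ite_mem S (fun i => ‖v i‖ ^ r)]
  refine Finset.sum_congr rfl fun i _ => ?_
  by_cases h : i ∈ S <;> simp [restr, h, Real.zero_rpow hr.ne']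

lemma bestApprox_nonneg (n : ℕ) (p : ℝ) (v : ι → ℂ) : 0 ≤ bestApprox n p v := by
  refine Real.sInf_nonneg fun t ht => ?_
  obtain ⟨z, _, rfl⟩ := ht
  exact lpNorm_nonneg _ _

lemma bestApprox_le {n : ℕ} {p : ℝ} {v w : ι → ℂ} (hw : sparsity w ≤ n) :
    bestApprox n p v ≤ lpNorm p (v - w) := by
  refine csInf_le ⟨0, fun t ht => ?_⟩ ⟨w, hw, rfl⟩
  obtain ⟨z, _, rfl⟩ := ht
  exact lpNorm_nonneg _ _

lemma bestApprox_le_restr {p : ℝ} {n : ℕ} {S : Finset ι} (hS : S.card ≤ n) (v : ι → ℂ) :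
    bestApprox n p v ≤ lpNorm p (restr Sᶜ v) := by
  have := bestApprox_le (p := p) (v := v) (le_trans (sparsity_restr_le S v) hS)
  rwa [sub_restr] at this

lemma bestApprox_eq_zero_of_sparse {p : ℝ} (hp : 0 < p) {n : ℕ} {v : ι → ℂ}
    (hv : sparsity v ≤ n) : bestApprox n p v = 0 := by
  refine le_antisymm ?_ (bestApprox_nonneg n p v)
  have := bestApprox_le (p := p) (v := v) hv
  rwa [sub_self, lpNorm_zero hp] at this

lemma bestApprox_exists {p : ℝ} (hp : 0 < p) (n : ℕ) (v : ι → ℂ) :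
    ∃ S : Finset ι, S.card ≤ n ∧ bestApprox n p v = lpNorm p (restr Sᶜ v) := by
  obtain ⟨S₀, hS₀mem, hS₀min⟩ := Finset.exists_min_image
    (Finset.univ.powerset.filter fun S => S.card ≤ n)
    (fun S => lpNorm p (restr Sᶜ v)) ⟨∅, by simp⟩
  have hS₀card : S₀.card ≤ n := (Finset.mem_filter.1 hS₀mem).2
  refine ⟨S₀, hS₀card, le_antisymm (bestApprox_le_restr hS₀card v) ?_⟩
  refine le_csInf ⟨lpNorm p (v - 0), 0, by simp [sparsity], rfl⟩ fun t ht => ?_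
  obtain ⟨w, hw, rfl⟩ := ht
  set T : Finset ι := Finset.univ.filter fun i => w i ≠ 0 with hT
  have hTmem : T ∈ Finset.univ.powerset.filter fun S => S.card ≤ n := by
    simp only [Finset.mem_filter, Finset.mem_powerset]
    exact ⟨Finset.subset_univ _, hw⟩
  refine (hS₀min T hTmem).trans (lpNorm_mono hp fun i => ?_)
  by_cases h : i ∈ T
  · simp [restr, h]
  · have hwi : w i = 0 := by
      by_contra hne
      exact h (by simp [hT, hne])
    simp [restr, h, hwi]

lemma lpNorm_restr_card {q' q : ℝ} (hq'1 : 1 ≤ q') (hq'q : q' ≤ q) (S : Finset ι) (v : ι → ℂ) :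
    lpNorm q' (restr S v) ≤ (S.card : ℝ) ^ (1 / q' - 1 / q) * lpNorm q (restr S v) := by
  have hq'0 : 0 < q' := lt_of_lt_of_le one_pos hq'1
  rcases eq_or_lt_of_le hq'q with rfl | hlt
  · rw [sub_self, Real.rpow_zero, one_mul]
  have hq0 : 0 < q := lt_trans hq'0 hlt
  set r := q / q' with hr
  have hr1 : 1 < r := (one_lt_div hq'0).2 hlt
  have hconj : r.HolderConjugate (Real.conjExponent r) := Real.HolderConjugate.conjExponent hr1
  have hr0 : 0 < r := lt_trans one_pos hr1
  have H := Real.inner_le_Lp_mul_Lq_of_nonneg S hconj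
    (f := fun i => ‖v i‖ ^ q') (g := fun _ => 1)
    (fun i _ => Real.rpow_nonneg (norm_nonneg _) _) (fun i _ => zero_le_one)
  simp only [mul_one, Real.one_rpow, Finset.sum_const, nsmul_eq_mul] at H
  have hpow : ∀ i, (‖v i‖ ^ q') ^ r = ‖v i‖ ^ q := by
    intro i
    rw [← Real.rpow_mul (norm_nonneg _)]
    congr 1
    rw [hr]; field_simp
  simp only [hpow] at H
  -- H : ∑ i in S, ‖v i‖ ^ q' ≤ (∑ i in S, ‖v i‖ ^ q) ^ (1/r) * (S.card * 1) ^ (1 / conj r)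
  have h2 : lpNorm q' (restr S v) ≤
      ((∑ i ∈ S, ‖v i‖ ^ q) ^ (1 / r) * (S.card : ℝ) ^ (1 / Real.conjExponent r)) ^ (1 / q') := by
    rw [lpNorm, sum_restr hq'0]
    exact Real.rpow_le_rpow (Finset.sum_nonneg fun i _ => Real.rpow_nonneg (norm_nonneg _) _)
      H (by positivity)
  have hsum0 : (0:ℝ) ≤ ∑ i ∈ S, ‖v i‖ ^ q :=
    Finset.sum_nonneg fun i _ => Real.rpow_nonneg (norm_nonneg _) _
  rw [Real.mul_rpow (Real.rpow_nonneg hsum0 _) (Real.rpow_nonneg (Nat.cast_nonneg _) _),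
    ← Real.rpow_mul hsum0, ← Real.rpow_mul (Nat.cast_nonneg _)] at h2
  have e1 : 1 / r * (1 / q') = 1 / q := by
    rw [hr]; field_simp
  have hrinv : r⁻¹ = q' / q := by rw [hr, inv_div]
  have e2 : 1 / Real.conjExponent r * (1 / q') = 1 / q' - 1 / q := by
    rw [one_div (Real.conjExponent r), ← hconj.one_sub_inv, hrinv]
    field_simp
  rw [e1, e2] at h2
  calc lpNorm q' (restr S v) ≤
      (∑ i ∈ S, ‖v i‖ ^ q) ^ (1 / q) * (S.card : ℝ) ^ (1 / q' - 1 / q) := h2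
    _ = (S.card : ℝ) ^ (1 / q' - 1 / q) * lpNorm q (restr S v) := by
        rw [mul_comm, lpNorm, sum_restr hq0]

/-- Top-`k` selection. -/
lemma exists_topk (v : ι → ℂ) : ∀ (k : ℕ) (R : Finset ι), ∃ S : Finset ι, S ⊆ R ∧
    (S.card = k ∨ S = R) ∧ S.card ≤ k ∧ ∀ i ∈ R \ S, ∀ j ∈ S, ‖v i‖ ≤ ‖v j‖ := by
  intro k
  induction k with
  | zero => intro R; exact ⟨∅, Finset.empty_subset _, Or.inl rfl, le_refl _,
      fun i _ j hj => absurd hj (Finset.notMem_empty j)⟩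
  | succ k ih =>
    intro R
    rcases Finset.eq_empty_or_nonempty R with rfl | hR
    · exact ⟨∅, Finset.empty_subset _, Or.inr rfl, Nat.zero_le _,
        fun i _ j hj => absurd hj (Finset.notMem_empty j)⟩
    obtain ⟨j₀, hj₀R, hj₀max⟩ := Finset.exists_max_image R (fun i => ‖v i‖) hR
    obtain ⟨S', hS'sub, hS'case, hS'card, hS'dom⟩ := ih (R.erase j₀)
    have hj₀S' : j₀ ∉ S' := fun hc => (Finset.mem_erase.1 (hS'sub hc)).1 rfl
    refine ⟨insert j₀ S', ?_, ?_, ?_, ?_⟩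
    · exact Finset.insert_subset hj₀R (hS'sub.trans (Finset.erase_subset _ _))
    · rcases hS'case with hc | hc
      · exact Or.inl (by rw [Finset.card_insert_of_notMem hj₀S', hc])
      · exact Or.inr (by rw [hc, Finset.insert_erase hj₀R])
    · rw [Finset.card_insert_of_notMem hj₀S']; omega
    · intro i hi j hj
      have hiR : i ∈ R := (Finset.mem_sdiff.1 hi).1
      have hiS : i ∉ insert j₀ S' := (Finset.mem_sdiff.1 hi).2
      rcases Finset.mem_insert.1 hj with rfl | hjS'
      · exact hj₀max i hiR
      · refine hS'dom i ?_ j hjS'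
        rw [Finset.mem_sdiff, Finset.mem_erase]
        exact ⟨⟨fun hc => hiS (hc ▸ Finset.mem_insert_self _ _), hiR⟩,
          fun hc => hiS (Finset.mem_insert_of_mem hc)⟩

end Stmt9Aux

section Main

open Stmt9Aux

variable {m N : ℕ}

/-- Null space property of order `2n` derived from instance optimality. -/
lemma NSP2 {A : Matrix (Fin m) (Fin N) ℂ} {Δ : (Fin m → ℂ) → Fin N → ℂ} {q p : ℝ} {n : ℕ}
    {C : ℝ} (hp : 0 < p) (hq : 0 < q) (hC : 0 ≤ C) (h : InstOpt A Δ q p n C)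
    {v : Fin N → ℂ} (hv : A.mulVec v = 0) {S₁ S₂ : Finset (Fin N)}
    (h1 : S₁.card ≤ n) (h2 : S₂.card ≤ n) :
    lpNorm q v ≤ C * (n : ℝ) ^ (1 / q - 1 / p) * lpNorm p (restr (S₁ ∪ S₂)ᶜ v) := by
  set u := restr S₁ v with hu
  set z2 := restr S₁ᶜ v with hz2
  have hvz2 : v - u = z2 := sub_restr S₁ v
  have hmv : A.mulVec z2 = A.mulVec (-u) := by
    have e1 : A.mulVecLin (v - u) = A.mulVecLin v - A.mulVecLin u := map_sub _ _ _
    have e2 : A.mulVecLin (-u) = -A.mulVecLin u := map_neg _ _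
    rw [hvz2] at e1
    simp only [Matrix.mulVecLin_apply] at e1 e2
    rw [e1, e2, hv, zero_sub]
  -- Δ recovers -u exactly
  have hsu : sparsity (-u) ≤ n := by
    have : sparsity (-u) = sparsity u := by
      unfold sparsity
      congr 1
      apply Finset.filter_congr
      intro i _
      simp
    rw [this]
    exact le_trans (sparsity_restr_le S₁ v) h1
  have hΔ : Δ (A.mulVec z2) = -u := by
    have hh := h (-u)
    rw [bestApprox_eq_zero_of_sparse hp hsu, mul_zero] at hh
    have := le_antisymm hh (lpNorm_nonneg _ _)
    have hz := lpNorm_eq_zero hq this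
    rw [hmv]
    have := sub_eq_zero.mp hz
    exact this.symm
  have hh2 := h z2
  rw [hΔ, sub_neg_eq_add] at hh2
  have hz2u : z2 + u = v := by
    rw [← hvz2]; ring
  rw [hz2u] at hh2
  -- bound bestApprox of z2
  have hba : bestApprox n p z2 ≤ lpNorm p (restr (S₁ ∪ S₂)ᶜ v) := by
    have hsp : sparsity (restr S₂ z2) ≤ n := le_trans (sparsity_restr_le S₂ z2) h2
    have hE : z2 - restr S₂ z2 = restr (S₁ ∪ S₂)ᶜ v := by
      funext i
      by_cases hi1 : i ∈ S₁ <;> by_cases hi2 : i ∈ S₂ <;>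
        simp [restr, hz2, hi1, hi2]
    have := bestApprox_le (p := p) (v := z2) hsp
    rwa [hE] at this
  calc lpNorm q v ≤ C * (n : ℝ) ^ (1 / q - 1 / p) * bestApprox n p z2 := hh2
    _ ≤ C * (n : ℝ) ^ (1 / q - 1 / p) * lpNorm p (restr (S₁ ∪ S₂)ᶜ v) := by
        refine mul_le_mul_of_nonneg_left hba ?_
        positivity

/-- `ℓ_{q'}` null space property derived from instance optimality. -/
lemma NSPq' {A : Matrix (Fin m) (Fin N) ℂ} {Δ : (Fin m → ℂ) → Fin N → ℂ} {p q' q : ℝ} {n : ℕ}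
    {C : ℝ} (hp : 1 ≤ p) (hpq' : p ≤ q') (hq'q : q' ≤ q) (hn : 0 < n) (hC : 0 ≤ C)
    (h : InstOpt A Δ q p n C) {v : Fin N → ℂ} (hv : A.mulVec v = 0)
    {W : Finset (Fin N)} (hW : W.card ≤ 2 * n) :
    lpNorm q' v ≤ (3 * C + 1) * (n : ℝ) ^ (1 / q' - 1 / p) * lpNorm p (restr Wᶜ v) := by
  have hp0 : 0 < p := lt_of_lt_of_le one_pos hp
  have hq'0 : 0 < q' := lt_of_lt_of_le hp0 hpq'
  have hq0 : 0 < q := lt_of_lt_of_le hq'0 hq'q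
  have hn0 : (0:ℝ) < (n:ℝ) := by exact_mod_cast hn
  set B := lpNorm p (restr Wᶜ v) with hB
  have hB0 : 0 ≤ B := lpNorm_nonneg _ _
  set e := 1 / q' - 1 / q with he
  have he0 : 0 ≤ e := by
    have := one_div_le_one_div_of_le hq'0 hq'q
    simp only [he, sub_nonneg]
    exact this
  have he1 : e ≤ 1 := by
    have h1 : 1 / q' ≤ 1 := by
      rw [div_le_one hq'0]; linarith
    have h2 : 0 < 1 / q := by positivity
    simp only [he]; linarith
  set β' := (n : ℝ) ^ (1 / q' - 1 / p) with hβ'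
  have hβ'0 : 0 < β' := Real.rpow_pos_of_pos hn0 _
  -- split W
  obtain ⟨S₁, S₂, hS1, hS2, hU⟩ : ∃ S₁ S₂ : Finset (Fin N),
      S₁.card ≤ n ∧ S₂.card ≤ n ∧ S₁ ∪ S₂ = W := by
    rcases le_or_gt W.card n with hWn | hWn
    · exact ⟨W, ∅, hWn, by simp, by simp⟩
    · obtain ⟨S₁, hsub, hcard⟩ := Finset.exists_subset_card_eq hWn.le
      have hsd := Finset.card_sdiff_of_subset hsub
      exact ⟨S₁, W \ S₁, hcard.le, by omega, Finset.union_sdiff_of_subset hsub⟩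
  have hq_bound : lpNorm q v ≤ C * (n : ℝ) ^ (1 / q - 1 / p) * B := by
    have := NSP2 hp0 hq0 hC h hv hS1 hS2
    rwa [hU] at this
  obtain ⟨S₃, hsub3, hcase3, hcard3, hdom⟩ := exists_topk v n Wᶜ
  set G := W ∪ S₃ with hG
  have hWG : W ⊆ G := Finset.subset_union_left
  have hGcWc : Gᶜ ⊆ Wᶜ := Finset.compl_subset_compl.2 hWG
  have htri : lpNorm q' v ≤ lpNorm q' (restr G v) + lpNorm q' (restr Gᶜ v) := by
    have hsplit : v = restr G v + restr Gᶜ v := by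
      rw [← sub_restr]; ring
    calc lpNorm q' v = lpNorm q' (restr G v + restr Gᶜ v) := by rw [← hsplit]
      _ ≤ _ := lpNorm_add_le (le_trans hp hpq') _ _
  have hT1 : lpNorm q' (restr G v) ≤ 3 * C * β' * B := by
    have h1 : lpNorm q' (restr G v) ≤ (G.card : ℝ) ^ e * lpNorm q (restr G v) :=
      lpNorm_restr_card (le_trans hp hpq') hq'q G v
    have h2 : lpNorm q (restr G v) ≤ lpNorm q v := lpNorm_restr_le hq0 _ _
    have hcardG : (G.card : ℝ) ≤ 3 * (n:ℝ) := by
      have h6 : G.card ≤ W.card + S₃.card := Finset.card_union_le W S₃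
      have h7 : G.card ≤ 3 * n := by omega
      exact_mod_cast h7
    have h3 : (G.card : ℝ) ^ e ≤ (3 * (n:ℝ)) ^ e :=
      Real.rpow_le_rpow (Nat.cast_nonneg _) hcardG he0
    have h4 : (3 * (n:ℝ)) ^ e * ((n:ℝ) ^ (1 / q - 1 / p)) = (3:ℝ) ^ e * β' := by
      rw [Real.mul_rpow (by norm_num) hn0.le, mul_assoc, ← Real.rpow_add hn0, hβ']
      congr 2
      simp only [he]; ring
    have h5 : (3:ℝ) ^ e ≤ 3 := by
      calc (3:ℝ) ^ e ≤ (3:ℝ) ^ (1:ℝ) :=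
        Real.rpow_le_rpow_of_exponent_le (by norm_num) he1
        _ = 3 := Real.rpow_one 3
    have hGe0 : (0:ℝ) ≤ (G.card : ℝ) ^ e := Real.rpow_nonneg (Nat.cast_nonneg _) _
    calc lpNorm q' (restr G v) ≤ (G.card : ℝ) ^ e * lpNorm q v :=
          h1.trans (mul_le_mul_of_nonneg_left h2 hGe0)
      _ ≤ (3 * (n:ℝ)) ^ e * (C * (n : ℝ) ^ (1 / q - 1 / p) * B) :=
          mul_le_mul h3 hq_bound (lpNorm_nonneg _ _) (Real.rpow_nonneg (by positivity) _)
      _ = (3 * (n:ℝ)) ^ e * ((n : ℝ) ^ (1 / q - 1 / p)) * (C * B) := by ring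
      _ = ((3:ℝ) ^ e * β') * (C * B) := by rw [h4]
      _ = ((3:ℝ) ^ e) * C * β' * B := by ring
      _ ≤ 3 * C * β' * B := by
          have : (0:ℝ) ≤ C * β' * B := by positivity
          nlinarith [hβ'0.le, hB0, mul_nonneg (mul_nonneg hC hβ'0.le) hB0]
  have hT2 : lpNorm q' (restr Gᶜ v) ≤ β' * B := by
    rcases hcase3 with hc3 | hc3
    · -- S₃.card = n
      by_cases hBz : B = 0
      · have hvW : restr Wᶜ v = 0 := lpNorm_eq_zero hp0 (by rw [← hB, hBz])
        have : restr Gᶜ v = 0 := by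
          funext i
          by_cases hi : i ∈ Gᶜ
          · have hiW : i ∈ Wᶜ := hGcWc hi
            have := congrFun hvW i
            simp only [restr, hiW, if_pos, Pi.zero_apply] at this
            simp [restr, hi, this]
          · simp [restr, hi]
        rw [this, lpNorm_zero hq'0, hBz, mul_zero]
      have hBpos : 0 < B := lt_of_le_of_ne hB0 (Ne.symm hBz)
      have hsumW : ∑ i ∈ Wᶜ, ‖v i‖ ^ p = B ^ p := by
        rw [hB, lpNorm_rpow hp0, sum_restr hp0]
      have hkey : ∀ i ∈ Gᶜ, ‖v i‖ ^ p ≤ B ^ p / (n:ℝ) := by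
        intro i hi
        have hiW : i ∈ Wᶜ \ S₃ := by
          rw [Finset.mem_sdiff]
          constructor
          · exact hGcWc hi
          · intro hc
            exact (Finset.mem_compl.1 hi) (Finset.mem_union_right _ hc)
        have hsum3 : (n:ℝ) * (‖v i‖ ^ p) ≤ ∑ j ∈ S₃, ‖v j‖ ^ p := by
          have := Finset.card_nsmul_le_sum S₃ (fun j => ‖v j‖ ^ p) (‖v i‖ ^ p)
            (fun j hj => Real.rpow_le_rpow (norm_nonneg _) (hdom i hiW j hj) hp0.le)
          rw [hc3] at this
          simpa [nsmul_eq_mul] using this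
        have hsub : ∑ j ∈ S₃, ‖v j‖ ^ p ≤ ∑ j ∈ Wᶜ, ‖v j‖ ^ p :=
          Finset.sum_le_sum_of_subset_of_nonneg hsub3
            (fun j _ _ => Real.rpow_nonneg (norm_nonneg _) _)
        rw [hsumW] at hsub
        rw [le_div_iff₀ hn0]
        calc ‖v i‖ ^ p * (n:ℝ) = (n:ℝ) * (‖v i‖ ^ p) := by ring
          _ ≤ _ := le_trans hsum3 hsub
      have hsum2 : ∑ i, ‖restr Gᶜ v i‖ ^ q' ≤ B ^ p * (B ^ p / (n:ℝ)) ^ ((q' - p) / p) := by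
        rw [sum_restr hq'0]
        have hterm : ∀ i ∈ Gᶜ, ‖v i‖ ^ q' ≤ ‖v i‖ ^ p * (B ^ p / (n:ℝ)) ^ ((q' - p) / p) := by
          intro i hi
          have e6 : ‖v i‖ ^ q' = ‖v i‖ ^ p * ‖v i‖ ^ (q' - p) := by
            rw [← Real.rpow_add_of_nonneg (norm_nonneg _) hp0.le (by linarith)]
            congr 1; ring
          have e7 : ‖v i‖ ^ (q' - p) ≤ (B ^ p / (n:ℝ)) ^ ((q' - p) / p) := by
            have e8 : ‖v i‖ ^ (q' - p) = (‖v i‖ ^ p) ^ ((q' - p) / p) := by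
              rw [← Real.rpow_mul (norm_nonneg _)]
              congr 1
              field_simp
            rw [e8]
            exact Real.rpow_le_rpow (Real.rpow_nonneg (norm_nonneg _) _) (hkey i hi)
              (div_nonneg (by linarith) hp0.le)
          calc ‖v i‖ ^ q' = ‖v i‖ ^ p * ‖v i‖ ^ (q' - p) := e6
            _ ≤ ‖v i‖ ^ p * (B ^ p / (n:ℝ)) ^ ((q' - p) / p) :=
              mul_le_mul_of_nonneg_left e7 (Real.rpow_nonneg (norm_nonneg _) _)
        calc ∑ i ∈ Gᶜ, ‖v i‖ ^ q'
            ≤ ∑ i ∈ Gᶜ, ‖v i‖ ^ p * (B ^ p / (n:ℝ)) ^ ((q' - p) / p) :=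
              Finset.sum_le_sum hterm
          _ = (∑ i ∈ Gᶜ, ‖v i‖ ^ p) * (B ^ p / (n:ℝ)) ^ ((q' - p) / p) := by
              rw [← Finset.sum_mul]
          _ ≤ B ^ p * (B ^ p / (n:ℝ)) ^ ((q' - p) / p) := by
              refine mul_le_mul_of_nonneg_right ?_
                (Real.rpow_nonneg (div_nonneg (Real.rpow_nonneg hB0 _) hn0.le) _)
              rw [← hsumW]
              exact Finset.sum_le_sum_of_subset_of_nonneg hGcWc
                (fun j _ _ => Real.rpow_nonneg (norm_nonneg _) _)
      have hfinal : (B ^ p * (B ^ p / (n:ℝ)) ^ ((q' - p) / p)) ^ (1 / q') = β' * B := by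
        have hBp : (0:ℝ) < B ^ p := Real.rpow_pos_of_pos hBpos _
        have hni : (0:ℝ) < ((n:ℝ))⁻¹ := by positivity
        have eexp : p * ((q' - p) / p) = q' - p := by field_simp
        have s1 : (B ^ p / (n:ℝ)) ^ ((q' - p) / p)
            = B ^ (q' - p) * ((n:ℝ)⁻¹) ^ ((q' - p) / p) := by
          rw [div_eq_mul_inv, Real.mul_rpow hBp.le hni.le, ← Real.rpow_mul hB0, eexp]
        have s2 : (((n:ℝ)⁻¹) ^ ((q' - p) / p)) ^ (1 / q') = β' := by
          rw [← Real.rpow_mul hni.le, Real.inv_rpow hn0.le, ← Real.rpow_neg hn0.le, hβ']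
          congr 1
          field_simp
          ring
        rw [s1, ← mul_assoc, Real.mul_rpow (mul_nonneg hBp.le (Real.rpow_nonneg hB0 _))
          (Real.rpow_nonneg hni.le _), ← Real.rpow_add hBpos]
        have e9 : p + (q' - p) = q' := by ring
        rw [e9, ← Real.rpow_mul hB0, mul_one_div, div_self hq'0.ne', Real.rpow_one, s2,
          mul_comm]
      calc lpNorm q' (restr Gᶜ v)
          ≤ (B ^ p * (B ^ p / (n:ℝ)) ^ ((q' - p) / p)) ^ (1 / q') := by
            rw [lpNorm]
            refine Real.rpow_le_rpow (sum_rpow_nonneg _ _) hsum2 (by positivity)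
        _ = β' * B := hfinal
    · -- S₃ = Wᶜ, so G = univ and Gᶜ = ∅
      have hGuniv : G = Finset.univ := by
        rw [hG, hc3, Finset.union_compl]
      have : restr Gᶜ v = 0 := by
        funext i
        simp [restr, hGuniv]
      rw [this, lpNorm_zero hq'0]
      positivity
  calc lpNorm q' v ≤ lpNorm q' (restr G v) + lpNorm q' (restr Gᶜ v) := htri
    _ ≤ 3 * C * β' * B + β' * B := add_le_add hT1 hT2
    _ = (3 * C + 1) * β' * B := by ring

/-- Restriction as a linear map. -/
noncomputable def restrL {ι : Type*} [Fintype ι] [DecidableEq ι] (S : Finset ι) :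
    (ι → ℂ) →ₗ[ℂ] (ι → ℂ) where
  toFun := restr S
  map_add' u v := funext fun i => by by_cases h : i ∈ S <;> simp [restr, h]
  map_smul' a v := funext fun i => by by_cases h : i ∈ S <;> simp [restr, h]

/-- The `ℓ_p` distance to a coordinate subspace is attained on each fiber of `A`. -/
lemma exists_min_restr (A : Matrix (Fin m) (Fin N) ℂ) {p : ℝ} (hp : 1 ≤ p)
    (S : Finset (Fin N)) (z₀ : Fin N → ℂ) :
    ∃ x : Fin N → ℂ, A.mulVec x = A.mulVec z₀ ∧
      ∀ z, A.mulVec z = A.mulVec z₀ → lpNorm p (restr S x) ≤ lpNorm p (restr S z) := by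
  have hp0 : 0 < p := lt_of_lt_of_le one_pos hp
  set K := LinearMap.ker (Matrix.mulVecLin A) with hK
  set U : Submodule ℂ (Fin N → ℂ) := K.map (restrL S) with hUdef
  set c := restr S z₀ with hc
  set G : (Fin N → ℂ) → ℝ := fun u => lpNorm p (c + u) with hGdef
  have hGcont : Continuous G := by
    have h1 : Continuous fun u : Fin N → ℂ => ∑ i, ‖c i + u i‖ ^ p :=
      continuous_finset_sum _ fun i _ =>
        ((continuous_const.add (continuous_apply i)).norm).rpow_const fun u => Or.inr hp0.le
    exact h1.rpow_const fun u => Or.inr (by positivity)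
  have hLB : ∀ u : Fin N → ℂ, ‖u‖ - lpNorm p c ≤ G u := by
    intro u
    have h1 : lpNorm p u ≤ G u + lpNorm p c := by
      have h2 := lpNorm_add_le hp (c + u) (-c)
      have h3 : (c + u) + (-c) = u := by ring
      rw [h3, lpNorm_neg] at h2
      exact h2
    have h2 : ‖u‖ ≤ lpNorm p u :=
      (pi_norm_le_iff_of_nonneg (lpNorm_nonneg _ _)).2 fun i => coord_le_lpNorm hp0 u i
    linarith
  have hmin : ∃ u ∈ (U : Set (Fin N → ℂ)), IsMinOn G (U : Set (Fin N → ℂ)) u := by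
    refine hGcont.continuousOn.exists_isMinOn' U.closed_of_finiteDimensional
      (U.zero_mem) ?_
    refine ((tendsto_norm_cocompact_atTop.eventually_ge_atTop
      (lpNorm p c + G 0 + 1)).filter_mono inf_le_left).mono fun u hu => ?_
    have := hLB u
    linarith
  obtain ⟨u, huU, humin⟩ := hmin
  obtain ⟨k, hkK, hku⟩ := Submodule.mem_map.1 huU
  have hAk : A.mulVec k = 0 := hkK
  refine ⟨z₀ + k, ?_, ?_⟩
  · have : A.mulVecLin (z₀ + k) = A.mulVecLin z₀ + A.mulVecLin k := map_add _ _ _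
    simp only [Matrix.mulVecLin_apply] at this
    rw [this, hAk, add_zero]
  · intro z hz
    have hk' : z - z₀ ∈ K := by
      rw [hK, LinearMap.mem_ker]
      have : A.mulVecLin (z - z₀) = A.mulVecLin z - A.mulVecLin z₀ := map_sub _ _ _
      simp only [Matrix.mulVecLin_apply] at this ⊢
      rw [this, hz, sub_self]
    have hmem : restrL S (z - z₀) ∈ U := Submodule.mem_map_of_mem hk'
    have hmle : G u ≤ G (restrL S (z - z₀)) := humin hmem
    have e1 : restr S (z₀ + k) = c + restrL S k := by
      have : restrL S (z₀ + k) = restrL S z₀ + restrL S k := map_add _ _ _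
      simpa [restrL, hc] using this
    have e2 : restr S z = c + restrL S (z - z₀) := by
      have h4 : restrL S z = restrL S z₀ + restrL S (z - z₀) := by
        rw [← map_add]
        congr 1
        ring
      simpa [restrL, hc] using h4
    rw [e1, e2, hku]
    exact hmle

/-- There is a minimizer of `bestApprox` over each fiber of `A`. -/
lemma exists_sigma_min (A : Matrix (Fin m) (Fin N) ℂ) {p : ℝ} (hp : 1 ≤ p) (n : ℕ)
    (z₀ : Fin N → ℂ) :
    ∃ x : Fin N → ℂ, A.mulVec x = A.mulVec z₀ ∧
      ∀ z, A.mulVec z = A.mulVec z₀ → bestApprox n p x ≤ bestApprox n p z := by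
  have hp0 : 0 < p := lt_of_lt_of_le one_pos hp
  set 𝒮 : Finset (Finset (Fin N)) := Finset.univ.powerset.filter fun S => S.card ≤ n with h𝒮
  have hch : ∀ S : Finset (Fin N), ∃ x : Fin N → ℂ, A.mulVec x = A.mulVec z₀ ∧
      ∀ z, A.mulVec z = A.mulVec z₀ → lpNorm p (restr Sᶜ x) ≤ lpNorm p (restr Sᶜ z) :=
    fun S => exists_min_restr A hp Sᶜ z₀
  choose xS hxS1 hxS2 using hch
  obtain ⟨S₀, hS₀mem, hS₀min⟩ := Finset.exists_min_image 𝒮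
    (fun S => lpNorm p (restr Sᶜ (xS S))) ⟨∅, by simp [h𝒮]⟩
  refine ⟨xS S₀, hxS1 S₀, fun z hz => ?_⟩
  obtain ⟨T, hTcard, hTeq⟩ := bestApprox_exists hp0 n z
  have hTmem : T ∈ 𝒮 := by
    simp only [h𝒮, Finset.mem_filter, Finset.mem_powerset]
    exact ⟨Finset.subset_univ _, hTcard⟩
  have hS₀card : S₀.card ≤ n := (Finset.mem_filter.1 hS₀mem).2
  calc bestApprox n p (xS S₀) ≤ lpNorm p (restr S₀ᶜ (xS S₀)) := bestApprox_le_restr hS₀card _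
    _ ≤ lpNorm p (restr Tᶜ (xS T)) := hS₀min T hTmem
    _ ≤ lpNorm p (restr Tᶜ z) := hxS2 T z hz
    _ = bestApprox n p z := hTeq.symm

end Main

/-- **Instance optimality can be transferred to smaller exponents**
(Foucart–Rauhut, Thm. 11.8).  If `(A,Δ)` is `(q,p)`–`n`–instance-optimal with
constant `C_N` and `q ≥ q' ≥ p ≥ 1`, then there exists `Δ'` such that `(A,Δ')` is
`(q',p)`–`n`–instance-optimal with constant `6 C_N + 2`. -/
theorem stmt9 {m N : ℕ} (p q' q : ℝ) (hp : 1 ≤ p) (hpq' : p ≤ q') (hq'q : q' ≤ q)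
    (n : ℕ) (hn : 0 < n) (A : Matrix (Fin m) (Fin N) ℂ) (CN : ℝ)
    (Δ : (Fin m → ℂ) → Fin N → ℂ) (h : InstOpt A Δ q p n CN) :
    ∃ Δ' : (Fin m → ℂ) → Fin N → ℂ, InstOpt A Δ' q' p n (6 * CN + 2) := by
  have hp0 : 0 < p := lt_of_lt_of_le one_pos hp
  have hq'0 : 0 < q' := lt_of_lt_of_le hp0 hpq'
  have hq0 : 0 < q := lt_of_lt_of_le hq'0 hq'q
  have hn0 : (0:ℝ) < (n:ℝ) := by exact_mod_cast hn
  rcases lt_or_ge CN 0 with hC | hC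
  · -- degenerate case: the decoder is exact and `bestApprox` vanishes identically
    refine ⟨Δ, fun z => ?_⟩
    have hz := h z
    have hβ : (0:ℝ) < (n:ℝ) ^ (1 / q - 1 / p) := Real.rpow_pos_of_pos hn0 _
    have hba0 : bestApprox n p z = 0 := by
      by_contra hne
      have hbapos : 0 < bestApprox n p z :=
        lt_of_le_of_ne (Stmt9Aux.bestApprox_nonneg n p z) (Ne.symm hne)
      have : CN * (n:ℝ) ^ (1 / q - 1 / p) * bestApprox n p z < 0 := by
        apply mul_neg_of_neg_of_pos _ hbapos
        exact mul_neg_of_neg_of_pos hC hβ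
      exact absurd (lt_of_le_of_lt hz this) (not_lt.2 (Stmt9Aux.lpNorm_nonneg _ _))
    have hzero : z - Δ (A.mulVec z) = 0 := by
      refine Stmt9Aux.lpNorm_eq_zero hq0 (le_antisymm ?_ (Stmt9Aux.lpNorm_nonneg _ _))
      calc lpNorm q (z - Δ (A.mulVec z)) ≤ CN * (n:ℝ) ^ (1 / q - 1 / p) * bestApprox n p z :=
            hz
        _ = 0 := by rw [hba0, mul_zero]
    rw [hzero, Stmt9Aux.lpNorm_zero hq'0, hba0, mul_zero]
  · -- main case
    classical
    refine ⟨fun y => if hy : ∃ x : Fin N → ℂ, A.mulVec x = y ∧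
        ∀ z, A.mulVec z = y → bestApprox n p x ≤ bestApprox n p z
      then hy.choose else 0, fun z => ?_⟩
    set y := A.mulVec z with hy
    have hex : ∃ x : Fin N → ℂ, A.mulVec x = y ∧
        ∀ w, A.mulVec w = y → bestApprox n p x ≤ bestApprox n p w := by
      obtain ⟨x, hx1, hx2⟩ := exists_sigma_min A hp n z
      exact ⟨x, hx1, hx2⟩
    simp only [dif_pos hex]
    set x := hex.choose with hx
    obtain ⟨hxA, hxmin⟩ := hex.choose_spec
    have hσ : bestApprox n p x ≤ bestApprox n p z := hxmin z rfl
    have hv : A.mulVec (z - x) = 0 := by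
      have : A.mulVecLin (z - x) = A.mulVecLin z - A.mulVecLin x := map_sub _ _ _
      simp only [Matrix.mulVecLin_apply] at this
      rw [this, hxA, ← hy, sub_self]
    obtain ⟨S, hScard, hSeq⟩ := Stmt9Aux.bestApprox_exists hp0 n z
    obtain ⟨T, hTcard, hTeq⟩ := Stmt9Aux.bestApprox_exists hp0 n x
    set W := S ∪ T with hW
    have hWcard : W.card ≤ 2 * n := by
      have h1 : W.card ≤ S.card + T.card := by
        rw [hW]; exact Finset.card_union_le S T
      omega
    have hmain := NSPq' hp hpq' hq'q hn hC h hv hWcard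
    have htail : lpNorm p (Stmt9Aux.restr Wᶜ (z - x)) ≤ 2 * bestApprox n p z := by
      have hsplit : Stmt9Aux.restr Wᶜ (z - x) =
          Stmt9Aux.restr Wᶜ z - Stmt9Aux.restr Wᶜ x := by
        funext i
        by_cases hi : i ∈ Wᶜ <;> simp [Stmt9Aux.restr, hi]
      have h1 : lpNorm p (Stmt9Aux.restr Wᶜ (z - x)) ≤
          lpNorm p (Stmt9Aux.restr Wᶜ z) + lpNorm p (Stmt9Aux.restr Wᶜ x) := by
        rw [hsplit]
        exact Stmt9Aux.lpNorm_sub_le hp _ _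
      have h2 : lpNorm p (Stmt9Aux.restr Wᶜ z) ≤ bestApprox n p z := by
        rw [hSeq]
        exact Stmt9Aux.lpNorm_restr_mono hp0
          (Finset.compl_subset_compl.2 Finset.subset_union_left) z
      have h3 : lpNorm p (Stmt9Aux.restr Wᶜ x) ≤ bestApprox n p z := by
        calc lpNorm p (Stmt9Aux.restr Wᶜ x) ≤ lpNorm p (Stmt9Aux.restr Tᶜ x) :=
              Stmt9Aux.lpNorm_restr_mono hp0
                (Finset.compl_subset_compl.2 Finset.subset_union_right) x
          _ = bestApprox n p x := hTeq.symm
          _ ≤ bestApprox n p z := hσ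
      linarith
    have hβ'0 : (0:ℝ) ≤ (n:ℝ) ^ (1 / q' - 1 / p) := (Real.rpow_pos_of_pos hn0 _).le
    calc lpNorm q' (z - x) ≤
        (3 * CN + 1) * (n:ℝ) ^ (1 / q' - 1 / p) * lpNorm p (Stmt9Aux.restr Wᶜ (z - x)) :=
          hmain
      _ ≤ (3 * CN + 1) * (n:ℝ) ^ (1 / q' - 1 / p) * (2 * bestApprox n p z) := by
          refine mul_le_mul_of_nonneg_left htail ?_
          positivity
      _ = (6 * CN + 2) * (n:ℝ) ^ (1 / q' - 1 / p) * bestApprox n p z := by ring
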